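/- The Kantorovich–Rubinstein duality: for probability measures p, q on a compact metric space, the 1-Wasserstein distance equals sup over 1-Lipschitz functions ψ of E_p[ψ] − E_q[ψ]. -/

import Mathlib

open MeasureTheory

open Finset

section FiniteKR
variable {ι : Type*} [Fintype ι] [Nonempty ι] [DecidableEq ι]

lemma finite_kr (c : ι → ι → ℝ) (hc0 : ∀ i, c i i = 0) (hcnn : ∀ i j, 0 ≤ c i j)
    (htri : ∀ i j k, c i j ≤ c i k + c k j)
    (a b : ι → ℝ) (ha : ∀ i, 0 ≤ a i) (hb : ∀ i, 0 ≤ b i)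
    (hsa : ∑ i, a i = 1) (hsb : ∑ i, b i = 1) {ε : ℝ} (hε : 0 < ε) :
    ∃ ψ : ι → ℝ, (∀ i j, ψ i - ψ j ≤ c i j) ∧
      sInf {r : ℝ | ∃ γ : ι × ι → ℝ, (∀ z, 0 ≤ γ z) ∧ (∀ i, ∑ j, γ (i, j) = a i) ∧
          (∀ j, ∑ i, γ (i, j) = b j) ∧ r = ∑ z, γ z * c z.1 z.2} - ε
        ≤ ∑ i, (a i - b i) * ψ i := by
  classical
  set T : Set ℝ := {r : ℝ | ∃ γ : ι × ι → ℝ, (∀ z, 0 ≤ γ z) ∧ (∀ i, ∑ j, γ (i, j) = a i) ∧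
      (∀ j, ∑ i, γ (i, j) = b j) ∧ r = ∑ z, γ z * c z.1 z.2} with hT
  set v : ℝ := sInf T with hv
  have hbdd : BddBelow T := by
    refine ⟨0, fun r hr => ?_⟩
    obtain ⟨γ, hγ0, -, -, hr⟩ := hr
    subst hr
    exact Finset.sum_nonneg fun z _ => mul_nonneg (hγ0 z) (hcnn z.1 z.2)
  -- the ambient space and the affine map
  set K : Set (ι × ι → ℝ) := stdSimplex ℝ (ι × ι) with hK
  set L : ((ι × ι → ℝ)) →ₗ[ℝ] ((ι → ℝ) × (ι → ℝ) × ℝ) :=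
    { toFun := fun γ => (fun i => ∑ j, γ (i, j), fun j => ∑ i, γ (i, j), ∑ z, γ z * c z.1 z.2)
      map_add' := by
        intro γ δ
        refine Prod.ext (funext fun i => ?_) (Prod.ext (funext fun j => ?_) ?_) <;>
          simp [Pi.add_apply, Finset.sum_add_distrib, add_mul]
      map_smul' := by
        intro r γ
        refine Prod.ext (funext fun i => ?_) (Prod.ext (funext fun j => ?_) ?_) <;>
          simp [Pi.smul_apply, smul_eq_mul, Finset.mul_sum, mul_assoc] } with hL
  set A : (ι × ι → ℝ) → ((ι → ℝ) × (ι → ℝ) × ℝ) := fun γ => L γ - (a, b, 0) with hA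
  have hAcont : Continuous A := (L.continuous_of_finiteDimensional).sub continuous_const
  set C : Set ((ι → ℝ) × (ι → ℝ) × ℝ) := A '' K with hC
  have hCconv : Convex ℝ C := by
    have h1 : Convex ℝ (⇑L '' K) := (convex_stdSimplex ℝ (ι × ι)).linear_image L
    have h2 : C = (fun x => -((a, b, (0:ℝ)) : ((ι → ℝ) × (ι → ℝ) × ℝ)) + x) '' (⇑L '' K) := by
      rw [hC, Set.image_image]
      exact Set.image_congr' (fun γ => sub_eq_neg_add _ _)
    rw [h2]
    exact h1.translate _
  have hCcomp : IsCompact C := (isCompact_stdSimplex ℝ (ι × ι)).image hAcont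
  have hzC : (((0 : ι → ℝ), (0 : ι → ℝ), v - ε) : ((ι → ℝ) × (ι → ℝ) × ℝ)) ∉ C := by
    rintro ⟨γ, hγK, hAγ⟩
    have hγ0 : ∀ z, 0 ≤ γ z := hγK.1
    have h1 : (fun i => ∑ j, γ (i, j)) - a = 0 := congrArg Prod.fst hAγ
    have h2 : (fun j => ∑ i, γ (i, j)) - b = 0 := congrArg Prod.fst (congrArg Prod.snd hAγ)
    have h3 : (∑ z, γ z * c z.1 z.2) - 0 = v - ε := congrArg Prod.snd (congrArg Prod.snd hAγ)
    have hrow : ∀ i, ∑ j, γ (i, j) = a i := by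
      intro i; have := congrFun h1 i; simpa [sub_eq_zero] using this
    have hcol : ∀ j, ∑ i, γ (i, j) = b j := by
      intro j; have := congrFun h2 j; simpa [sub_eq_zero] using this
    have hmem : (∑ z, γ z * c z.1 z.2) ∈ T := ⟨γ, hγ0, hrow, hcol, rfl⟩
    have := csInf_le hbdd hmem
    rw [sub_zero] at h3
    rw [h3] at this
    linarith
  obtain ⟨f, u, hfu, huz⟩ := geometric_hahn_banach_closed_point hCconv hCcomp.isClosed hzC
  -- decompose f
  set φ : ι → ℝ := fun i => f ((Pi.single i 1 : ι → ℝ), 0, 0) with hφ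
  set χ : ι → ℝ := fun j => f ((0 : ι → ℝ), Pi.single j 1, 0) with hχ
  set s : ℝ := f ((0 : ι → ℝ), (0 : ι → ℝ), 1) with hs
  have heval : ∀ (x y : ι → ℝ) (t : ℝ),
      f (x, y, t) = (∑ i, x i * φ i) + (∑ j, y j * χ j) + t * s := by
    intro x y t
    have hx : ((x, y, t) : ((ι → ℝ) × (ι → ℝ) × ℝ)) = ((∑ i, (x i) • (((Pi.single i 1 : ι → ℝ), (0:ι → ℝ), (0:ℝ)) : ((ι → ℝ) × (ι → ℝ) × ℝ))) +
        (∑ j, (y j) • ((((0:ι → ℝ), (Pi.single j 1 : ι → ℝ), (0:ℝ))) : ((ι → ℝ) × (ι → ℝ) × ℝ)))) +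
        t • ((((0:ι → ℝ), (0:ι → ℝ), (1:ℝ))) : ((ι → ℝ) × (ι → ℝ) × ℝ)) := by
      refine Prod.ext ?_ (Prod.ext ?_ ?_)
      · simp only [Prod.fst_add, Prod.fst_sum, Prod.smul_fst, smul_zero, Finset.sum_const,
          smul_eq_mul, Prod.snd_add]
        funext k
        simp [Finset.sum_apply, Pi.single_apply, Finset.sum_ite_eq']
      · simp only [Prod.snd_add, Prod.fst_add, Prod.snd_sum, Prod.fst_sum, Prod.smul_snd,
          Prod.smul_fst, smul_zero, Finset.sum_const, smul_eq_mul]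
        funext k
        simp [Finset.sum_apply, Pi.single_apply, Finset.sum_ite_eq']
      · simp [Prod.snd_sum]
    rw [hx]
    simp only [map_add, map_sum, ContinuousLinearMap.map_smul, smul_eq_mul]
    rfl
  have hfz : f (((0 : ι → ℝ), (0 : ι → ℝ), v - ε) : ((ι → ℝ) × (ι → ℝ) × ℝ)) = (v - ε) * s := by
    rw [heval]; simp
  -- the basic separation inequality over the simplex
  have hkey : ∀ γ ∈ K, (∑ i, ((∑ j, γ (i, j)) - a i) * φ i) +
      (∑ j, ((∑ i, γ (i, j)) - b j) * χ j) + (∑ z, γ z * c z.1 z.2) * s < (v - ε) * s := by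
    intro γ hγ
    have h1 : f (A γ) < u := hfu _ ⟨γ, hγ, rfl⟩
    have h2 : A γ = (((fun i => ∑ j, γ (i, j)) - a : ι → ℝ),
        ((fun j => ∑ i, γ (i, j)) - b : ι → ℝ), (∑ z, γ z * c z.1 z.2) - 0) := rfl
    rw [h2, heval] at h1
    simp only [Pi.sub_apply, sub_zero] at h1
    have h3 : u < (v - ε) * s := by rw [← hfz]; exact huz
    linarith
  -- s is negative, via the product coupling
  set γ₀ : ι × ι → ℝ := fun z => a z.1 * b z.2 with hγ₀
  have hγ₀row : ∀ i, ∑ j, γ₀ (i, j) = a i := by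
    intro i; simp only [hγ₀, ← Finset.mul_sum]; rw [hsb, mul_one]
  have hγ₀col : ∀ j, ∑ i, γ₀ (i, j) = b j := by
    intro j; simp only [hγ₀, ← Finset.sum_mul]; rw [hsa, one_mul]
  have hγ₀K : γ₀ ∈ K := by
    refine ⟨fun z => mul_nonneg (ha _) (hb _), ?_⟩
    rw [Fintype.sum_prod_type]
    simp only [hγ₀, ← Finset.mul_sum]
    rw [Finset.sum_congr rfl (fun i _ => by rw [hsb, mul_one]), hsa]
  have hvγ₀ : v ≤ ∑ z, γ₀ z * c z.1 z.2 :=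
    csInf_le hbdd ⟨γ₀, fun z => mul_nonneg (ha _) (hb _), hγ₀row, hγ₀col, rfl⟩
  have hslt : s < 0 := by
    have h1 := hkey γ₀ hγ₀K
    have h2 : ∀ i, ((∑ j, γ₀ (i, j)) - a i) * φ i = 0 := fun i => by rw [hγ₀row i]; ring
    have h3 : ∀ j, ((∑ i, γ₀ (i, j)) - b j) * χ j = 0 := fun j => by rw [hγ₀col j]; ring
    rw [Finset.sum_congr rfl (fun i _ => h2 i), Finset.sum_congr rfl (fun j _ => h3 j)] at h1
    simp only [Finset.sum_const_zero, zero_add] at h1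
    nlinarith [hvγ₀, hε]
  have hsne : s ≠ 0 := ne_of_lt hslt
  -- vertex inequalities
  have hvertex : ∀ i₀ j₀, (φ i₀ - ∑ i, a i * φ i) + (χ j₀ - ∑ j, b j * χ j)
      + c i₀ j₀ * s < (v - ε) * s := by
    intro i₀ j₀
    set γ : ι × ι → ℝ := fun z => if z = (i₀, j₀) then 1 else 0 with hγdef
    have hγK : γ ∈ K := by
      refine ⟨fun z => ?_, ?_⟩
      · simp only [hγdef]; split <;> norm_num
      · simp only [hγdef]; simp [Finset.sum_ite_eq']
    have hrow : ∀ i, ∑ j, γ (i, j) = if i = i₀ then 1 else 0 := by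
      intro i
      have : ∀ j, γ (i, j) = if j = j₀ then (if i = i₀ then 1 else 0) else 0 := by
        intro j
        simp only [hγdef]
        by_cases h1 : i = i₀ <;> by_cases h2 : j = j₀ <;> simp [h1, h2, Prod.ext_iff]
      rw [Finset.sum_congr rfl (fun j _ => this j)]
      simp [Finset.sum_ite_eq']
    have hcol : ∀ j, ∑ i, γ (i, j) = if j = j₀ then 1 else 0 := by
      intro j
      have : ∀ i, γ (i, j) = if i = i₀ then (if j = j₀ then 1 else 0) else 0 := by
        intro i
        simp only [hγdef]
        by_cases h1 : i = i₀ <;> by_cases h2 : j = j₀ <;> simp [h1, h2, Prod.ext_iff]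
      rw [Finset.sum_congr rfl (fun i _ => this i)]
      simp [Finset.sum_ite_eq']
    have hcost : ∑ z, γ z * c z.1 z.2 = c i₀ j₀ := by
      have : ∀ z : ι × ι, γ z * c z.1 z.2
          = if z = (i₀, j₀) then c i₀ j₀ else 0 := by
        intro z
        simp only [hγdef, ite_mul, one_mul, zero_mul]
        split
        · rename_i h; subst h; ring
        · ring
      rw [Finset.sum_congr rfl (fun z _ => this z)]
      simp [Finset.sum_ite_eq']
    have h1 := hkey γ hγK
    rw [hcost] at h1
    have h2 : ∑ i, ((∑ j, γ (i, j)) - a i) * φ i = φ i₀ - ∑ i, a i * φ i := by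
      rw [Finset.sum_congr rfl (fun i _ => by rw [hrow i])]
      rw [Finset.sum_congr rfl (fun i (_ : i ∈ Finset.univ) => (sub_mul _ _ _ : _ = _)),
        Finset.sum_sub_distrib]
      congr 1
      simp [ite_mul, Finset.sum_ite_eq']
    have h3 : ∑ j, ((∑ i, γ (i, j)) - b j) * χ j = χ j₀ - ∑ j, b j * χ j := by
      rw [Finset.sum_congr rfl (fun j _ => by rw [hcol j])]
      rw [Finset.sum_congr rfl (fun j (_ : j ∈ Finset.univ) => (sub_mul _ _ _ : _ = _)),
        Finset.sum_sub_distrib]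
      congr 1
      simp [ite_mul, Finset.sum_ite_eq']
    rw [h2, h3] at h1
    exact h1
  -- build the dual pair
  set A0 : ℝ := ∑ i, a i * φ i with hA0
  set B0 : ℝ := ∑ j, b j * χ j with hB0
  set uu : ι → ℝ := fun i => (v - ε) + (A0 + B0) / s - φ i / s with huu
  set ww : ι → ℝ := fun j => -(χ j) / s with hww
  have key2 : ∀ i j, uu i + ww j < c i j := by
    intro i j
    have h1 := hvertex i j
    have hmul : (uu i + ww j) * s = (v - ε) * s + (A0 + B0) - φ i - χ j := by
      rw [huu, hww]; field_simp; ring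
    have h2 : c i j * s < (uu i + ww j) * s := by rw [hmul]; linarith
    exact (mul_lt_mul_right_of_neg hslt).mp h2
  have hdual : (∑ i, a i * uu i) + (∑ j, b j * ww j) = v - ε := by
    have h1 : ∑ i, a i * uu i = (v - ε) + (A0 + B0) / s - A0 / s := by
      calc ∑ i, a i * uu i = ∑ i, (a i * ((v - ε) + (A0 + B0) / s) - (a i * φ i) / s) :=
            Finset.sum_congr rfl (fun i _ => by rw [huu]; ring)
        _ = (∑ i, a i) * ((v - ε) + (A0 + B0) / s) - (∑ i, a i * φ i) / s := by
            rw [Finset.sum_sub_distrib, ← Finset.sum_mul, ← Finset.sum_div]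
        _ = (v - ε) + (A0 + B0) / s - A0 / s := by rw [hsa, ← hA0, one_mul]
    have h2 : ∑ j, b j * ww j = -(B0 / s) := by
      calc ∑ j, b j * ww j = ∑ j, -((b j * χ j) / s) :=
            Finset.sum_congr rfl (fun j _ => by rw [hww]; ring)
        _ = -((∑ j, b j * χ j) / s) := by rw [Finset.sum_neg_distrib, ← Finset.sum_div]
        _ = -(B0 / s) := by rw [← hB0]
    rw [h1, h2]
    ring
  -- the Lipschitz potential
  have hne : (Finset.univ : Finset ι).Nonempty := Finset.univ_nonempty
  set ψ : ι → ℝ := fun i => Finset.univ.inf' hne (fun j => c i j - ww j) with hψ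
  have hψu : ∀ i, uu i ≤ ψ i := by
    intro i
    rw [hψ]
    exact Finset.le_inf' hne _ (fun j _ => by linarith [key2 i j])
  have hψw : ∀ i, ψ i ≤ -(ww i) := by
    intro i
    have := Finset.inf'_le (fun j => c i j - ww j) (Finset.mem_univ i)
    rw [hψ]
    simpa only [hc0 i, zero_sub] using this
  have hψLip : ∀ i k, ψ i - ψ k ≤ c i k := by
    intro i k
    obtain ⟨j, -, hj⟩ := Finset.exists_mem_eq_inf' hne (fun j => c k j - ww j)
    have h1 : ψ i ≤ c i j - ww j := by rw [hψ]; exact Finset.inf'_le _ (Finset.mem_univ j)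
    have h2 : ψ k = c k j - ww j := by rw [hψ]; exact hj
    have := htri i j k
    rw [h2]
    linarith [htri i k k, htri i j k]
  refine ⟨ψ, hψLip, ?_⟩
  have h1 : ∑ i, a i * uu i ≤ ∑ i, a i * ψ i :=
    Finset.sum_le_sum (fun i _ => mul_le_mul_of_nonneg_left (hψu i) (ha i))
  have h2 : ∑ j, b j * ψ j ≤ ∑ j, b j * -(ww j) :=
    Finset.sum_le_sum (fun j _ => mul_le_mul_of_nonneg_left (hψw j) (hb j))
  have h3 : ∑ i, (a i - b i) * ψ i = (∑ i, a i * ψ i) - (∑ i, b i * ψ i) := by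
    rw [← Finset.sum_sub_distrib]
    exact Finset.sum_congr rfl (fun i _ => by ring)
  have h4 : ∑ j, b j * -(ww j) = -∑ j, b j * ww j := by
    rw [← Finset.sum_neg_distrib]
    exact Finset.sum_congr rfl (fun j _ => by ring)
  rw [h3]
  rw [h4] at h2
  linarith
end FiniteKR
lemma cont_integrable {X : Type*} [MeasurableSpace X] [MetricSpace X] [BorelSpace X]
    [CompactSpace X] (μ : Measure X) [IsFiniteMeasure μ] {f : X → ℝ} (hf : Continuous f) :
    Integrable f μ := by
  rw [← integrableOn_univ]
  exact hf.continuousOn.integrableOn_compact isCompact_univ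

lemma map_finset_sum_measure {X Y : Type*} [MeasurableSpace X] [MeasurableSpace Y] {ι : Type*}
    (s : Finset ι) (μ : ι → Measure X) {f : X → Y} (hf : Measurable f) :
    (∑ i ∈ s, μ i).map f = ∑ i ∈ s, (μ i).map f := by
  classical
  induction s using Finset.induction_on with
  | empty => simp
  | insert _ _ h ih => rw [Finset.sum_insert h, Finset.sum_insert h, Measure.map_add _ _ hf, ih]

lemma coupling_transfer {S : Type*} [MetricSpace S] [CompactSpace S] [MeasurableSpace S]
    [BorelSpace S] (p q : Measure S) [IsProbabilityMeasure p] [IsProbabilityMeasure q]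
    {ι : Type*} [Fintype ι] [DecidableEq ι] (x : ι → S) (A : ι → Set S) (δ : ℝ)
    (hmeas : ∀ i, MeasurableSet (A i)) (hsub : ∀ i, A i ⊆ Metric.ball (x i) δ)
    (hpsum : (∑ i, p.restrict (A i)) = p) (hqsum : (∑ i, q.restrict (A i)) = q)
    (γ' : ι × ι → ℝ) (hγ0 : ∀ z, 0 ≤ γ' z)
    (hrow : ∀ i, ∑ j, γ' (i, j) = (p (A i)).toReal)
    (hcol : ∀ j, ∑ i, γ' (i, j) = (q (A j)).toReal)
    (htot : ∑ z, γ' z = 1) :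
    ∃ γ : Measure (S × S), IsProbabilityMeasure γ ∧ γ.map Prod.fst = p ∧ γ.map Prod.snd = q ∧
      ∫ z, dist z.1 z.2 ∂γ ≤ (∑ z, γ' z * dist (x z.1) (x z.2)) + 2*δ := by
  classical
  set μ : ι → Measure S := fun i => if p (A i) = 0 then Measure.dirac (x i)
    else (p (A i))⁻¹ • p.restrict (A i) with hμ
  set ν : ι → Measure S := fun j => if q (A j) = 0 then Measure.dirac (x j)
    else (q (A j))⁻¹ • q.restrict (A j) with hν
  have hμprob : ∀ i, IsProbabilityMeasure (μ i) := by
    intro i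
    simp only [hμ]
    split
    · infer_instance
    · rename_i h
      refine ⟨?_⟩
      rw [Measure.smul_apply, Measure.restrict_apply_univ, smul_eq_mul,
        ENNReal.inv_mul_cancel h (measure_ne_top p _)]
  have hνprob : ∀ j, IsProbabilityMeasure (ν j) := by
    intro j
    simp only [hν]
    split
    · infer_instance
    · rename_i h
      refine ⟨?_⟩
      rw [Measure.smul_apply, Measure.restrict_apply_univ, smul_eq_mul,
        ENNReal.inv_mul_cancel h (measure_ne_top q _)]
  have hμkey : ∀ i, ENNReal.ofReal ((p (A i)).toReal) • μ i = p.restrict (A i) := by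
    intro i
    simp only [hμ]
    by_cases h : p (A i) = 0
    · rw [if_pos h, h]
      simp [Measure.restrict_eq_zero.mpr h]
    · rw [if_neg h, ENNReal.ofReal_toReal (measure_ne_top p _), smul_smul,
        ENNReal.mul_inv_cancel h (measure_ne_top p _), one_smul]
  have hνkey : ∀ j, ENNReal.ofReal ((q (A j)).toReal) • ν j = q.restrict (A j) := by
    intro j
    simp only [hν]
    by_cases h : q (A j) = 0
    · rw [if_pos h, h]
      simp [Measure.restrict_eq_zero.mpr h]
    · rw [if_neg h, ENNReal.ofReal_toReal (measure_ne_top q _), smul_smul,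
        ENNReal.mul_inv_cancel h (measure_ne_top q _), one_smul]
  set γm : Measure (S × S) := ∑ z : ι × ι, ENNReal.ofReal (γ' z) • ((μ z.1).prod (ν z.2))
    with hγm
  haveI hzprob : ∀ z : ι × ι, IsProbabilityMeasure ((μ z.1).prod (ν z.2)) := by
    intro z
    haveI := hμprob z.1
    haveI := hνprob z.2
    infer_instance
  have hγmprob : IsProbabilityMeasure γm := by
    refine ⟨?_⟩
    rw [hγm, Measure.finset_sum_apply]
    have : ∀ z : ι × ι, (ENNReal.ofReal (γ' z) • ((μ z.1).prod (ν z.2))) Set.univ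
        = ENNReal.ofReal (γ' z) := by
      intro z
      haveI := hzprob z
      rw [Measure.smul_apply, measure_univ, smul_eq_mul, mul_one]
    rw [Finset.sum_congr rfl (fun z _ => this z), ← ENNReal.ofReal_sum_of_nonneg
      (fun z _ => hγ0 z), htot, ENNReal.ofReal_one]
  have hmapfst : γm.map Prod.fst = p := by
    rw [hγm, map_finset_sum_measure _ _ measurable_fst]
    have h1 : ∀ z : ι × ι, (ENNReal.ofReal (γ' z) • ((μ z.1).prod (ν z.2))).map Prod.fst
        = ENNReal.ofReal (γ' z) • μ z.1 := by
      intro z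
      haveI := hνprob z.2
      rw [Measure.map_smul, Measure.map_fst_prod, measure_univ, one_smul]
    rw [Finset.sum_congr rfl (fun z _ => h1 z), Fintype.sum_prod_type]
    have h2 : ∀ i, ∑ j, ENNReal.ofReal (γ' (i, j)) • μ i = p.restrict (A i) := by
      intro i
      rw [← Finset.sum_smul, ← ENNReal.ofReal_sum_of_nonneg (fun j _ => hγ0 (i, j)),
        hrow i, hμkey i]
    rw [Finset.sum_congr rfl (fun i _ => h2 i), hpsum]
  have hmapsnd : γm.map Prod.snd = q := by
    rw [hγm, map_finset_sum_measure _ _ measurable_snd]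
    have h1 : ∀ z : ι × ι, (ENNReal.ofReal (γ' z) • ((μ z.1).prod (ν z.2))).map Prod.snd
        = ENNReal.ofReal (γ' z) • ν z.2 := by
      intro z
      haveI := hμprob z.1
      rw [Measure.map_smul, Measure.map_snd_prod, measure_univ, one_smul]
    rw [Finset.sum_congr rfl (fun z _ => h1 z), Fintype.sum_prod_type_right]
    have h2 : ∀ j, ∑ i, ENNReal.ofReal (γ' (i, j)) • ν j = q.restrict (A j) := by
      intro j
      rw [← Finset.sum_smul, ← ENNReal.ofReal_sum_of_nonneg (fun i _ => hγ0 (i, j)),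
        hcol j, hνkey j]
    rw [Finset.sum_congr rfl (fun j _ => h2 j), hqsum]
  -- cost bound
  have hdcont : Continuous (fun z : S × S => dist z.1 z.2) :=
    Continuous.dist continuous_fst continuous_snd
  have hintz : ∀ z : ι × ι, Integrable (fun w : S × S => dist w.1 w.2) ((μ z.1).prod (ν z.2)) := by
    intro z
    haveI := hzprob z
    exact cont_integrable _ hdcont
  have hintsmul : ∀ z : ι × ι,
      Integrable (fun w : S × S => dist w.1 w.2) (ENNReal.ofReal (γ' z) • ((μ z.1).prod (ν z.2))) := by
    intro z
    by_cases h : γ' z = 0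
    · rw [h, ENNReal.ofReal_zero, zero_smul]
      exact integrable_zero_measure
    · exact (integrable_smul_measure
        (by simp [ENNReal.ofReal_eq_zero, not_le.mpr (lt_of_le_of_ne (hγ0 z) (Ne.symm h))])
        ENNReal.ofReal_ne_top).mpr (hintz z)
  have hcost : ∫ z, dist z.1 z.2 ∂γm
      = ∑ z : ι × ι, γ' z * ∫ w, dist w.1 w.2 ∂((μ z.1).prod (ν z.2)) := by
    rw [hγm, integral_finset_sum_measure (fun z _ => hintsmul z)]
    refine Finset.sum_congr rfl (fun z _ => ?_)
    rw [integral_smul_measure, ENNReal.toReal_ofReal (hγ0 z), smul_eq_mul]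
  have hbound : ∀ z : ι × ι, γ' z ≠ 0 →
      ∫ w, dist w.1 w.2 ∂((μ z.1).prod (ν z.2)) ≤ dist (x z.1) (x z.2) + 2*δ := by
    rintro ⟨i, j⟩ hz
    have hγpos : 0 < γ' (i, j) := lt_of_le_of_ne (hγ0 (i, j)) (Ne.symm hz)
    have hpi : p (A i) ≠ 0 := by
      intro h0
      have h1 : (p (A i)).toReal = 0 := by rw [h0]; rfl
      have h2 : γ' (i, j) ≤ ∑ j', γ' (i, j') :=
        Finset.single_le_sum (fun j' _ => hγ0 (i, j')) (Finset.mem_univ j)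
      rw [hrow i, h1] at h2
      linarith
    have hqj : q (A j) ≠ 0 := by
      intro h0
      have h1 : (q (A j)).toReal = 0 := by rw [h0]; rfl
      have h2 : γ' (i, j) ≤ ∑ i', γ' (i', j) :=
        Finset.single_le_sum (fun i' _ => hγ0 (i', j)) (Finset.mem_univ i)
      rw [hcol j, h1] at h2
      linarith
    have hμc : μ i ((A i)ᶜ) = 0 := by
      simp only [hμ]; rw [if_neg hpi, Measure.smul_apply, Measure.restrict_apply (hmeas i).compl,
        Set.compl_inter_self, measure_empty, smul_eq_mul, mul_zero]
    have hνc : ν j ((A j)ᶜ) = 0 := by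
      simp only [hν]; rw [if_neg hqj, Measure.smul_apply, Measure.restrict_apply (hmeas j).compl,
        Set.compl_inter_self, measure_empty, smul_eq_mul, mul_zero]
    haveI := hμprob i
    haveI := hνprob j
    have hbad : ((μ i).prod (ν j)) ((A i ×ˢ A j)ᶜ) = 0 := by
      rw [Set.compl_prod_eq_union]
      refine measure_union_null ?_ ?_
      · rw [Measure.prod_prod, hμc, zero_mul]
      · rw [Measure.prod_prod, hνc, mul_zero]
    have hae : ∀ᵐ w ∂((μ i).prod (ν j)), w ∈ A i ×ˢ A j := by
      rw [ae_iff]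
      exact hbad
    have hmono : ∀ᵐ w ∂((μ i).prod (ν j)),
        dist w.1 w.2 ≤ dist (x i) (x j) + 2*δ := by
      filter_upwards [hae] with w hw
      have h1 : dist w.1 (x i) < δ := Metric.mem_ball.mp (hsub i hw.1)
      have h2 : dist w.2 (x j) < δ := Metric.mem_ball.mp (hsub j hw.2)
      have h3 := dist_triangle4 w.1 (x i) (x j) w.2
      have h4 : dist (x j) w.2 = dist w.2 (x j) := dist_comm _ _
      linarith
    have := integral_mono_ae (hintz (i, j)) (integrable_const (dist (x i) (x j) + 2*δ)) hmono
    rwa [integral_const, probReal_univ, one_smul] at this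
  refine ⟨γm, hγmprob, hmapfst, hmapsnd, ?_⟩
  rw [hcost]
  have h1 : ∀ z : ι × ι, γ' z * ∫ w, dist w.1 w.2 ∂((μ z.1).prod (ν z.2))
      ≤ γ' z * dist (x z.1) (x z.2) + γ' z * (2*δ) := by
    intro z
    by_cases h : γ' z = 0
    · rw [h]; simp
    · have := hbound z h
      have hγpos : 0 < γ' z := lt_of_le_of_ne (hγ0 z) (Ne.symm h)
      nlinarith
  calc ∑ z : ι × ι, γ' z * ∫ w, dist w.1 w.2 ∂((μ z.1).prod (ν z.2))
      ≤ ∑ z : ι × ι, (γ' z * dist (x z.1) (x z.2) + γ' z * (2*δ)) :=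
        Finset.sum_le_sum (fun z _ => h1 z)
    _ = (∑ z : ι × ι, γ' z * dist (x z.1) (x z.2)) + (∑ z : ι × ι, γ' z) * (2*δ) := by
        rw [Finset.sum_add_distrib, Finset.sum_mul]
    _ = (∑ z : ι × ι, γ' z * dist (x z.1) (x z.2)) + 2*δ := by rw [htot, one_mul]

/-- Kantorovich–Rubinstein duality on a compact metric space: the
1-Wasserstein distance between probability measures `p` and `q`, defined as the infimum
over couplings `γ` of `∫ d(x,y) dγ`, equals the supremum over 1-Lipschitz functions `ψ`
of `∫ ψ dp - ∫ ψ dq`. -/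
theorem kantorovich_rubinstein_duality
    {S : Type*} [MetricSpace S] [CompactSpace S] [MeasurableSpace S] [BorelSpace S]
    (p q : Measure S) [IsProbabilityMeasure p] [IsProbabilityMeasure q] :
    sInf {r : ℝ | ∃ γ : Measure (S × S), IsProbabilityMeasure γ ∧
          γ.map Prod.fst = p ∧ γ.map Prod.snd = q ∧
          r = ∫ z, dist z.1 z.2 ∂γ}
      = sSup {r : ℝ | ∃ ψ : S → ℝ, LipschitzWith 1 ψ ∧
          r = (∫ x, ψ x ∂p) - ∫ x, ψ x ∂q} := by
  classical
  have hSne : Nonempty S := by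
    by_contra h
    rw [not_nonempty_iff] at h
    have h1 : p Set.univ = 1 := measure_univ
    rw [Set.univ_eq_empty_iff.mpr h] at h1
    simp at h1
  set W : Set ℝ := {r : ℝ | ∃ γ : Measure (S × S), IsProbabilityMeasure γ ∧
      γ.map Prod.fst = p ∧ γ.map Prod.snd = q ∧ r = ∫ z, dist z.1 z.2 ∂γ} with hWdef
  set D : Set ℝ := {r : ℝ | ∃ ψ : S → ℝ, LipschitzWith 1 ψ ∧
      r = (∫ x, ψ x ∂p) - ∫ x, ψ x ∂q} with hDdef
  have hdcont : Continuous (fun z : S × S => dist z.1 z.2) :=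
    Continuous.dist continuous_fst continuous_snd
  have hprodmem : (∫ z : S × S, dist z.1 z.2 ∂(p.prod q)) ∈ W := by
    refine ⟨p.prod q, inferInstance, ?_, ?_, rfl⟩
    · rw [Measure.map_fst_prod, measure_univ, one_smul]
    · rw [Measure.map_snd_prod, measure_univ, one_smul]
  have hWne : W.Nonempty := ⟨_, hprodmem⟩
  have hWbdd : BddBelow W := by
    refine ⟨0, fun r hr => ?_⟩
    obtain ⟨γ, hγp, -, -, rfl⟩ := hr
    exact integral_nonneg (fun z => dist_nonneg)
  have hDne : D.Nonempty := ⟨0, fun _ => 0,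
    LipschitzWith.of_dist_le_mul (fun x y => by simp [dist_nonneg]), by simp⟩
  have heasy : ∀ r ∈ W, ∀ m ∈ D, m ≤ r := by
    rintro r ⟨γ, hγp, hγ1, hγ2, rfl⟩ m ⟨ψ, hψ, rfl⟩
    haveI := hγp
    have hψc : Continuous ψ := hψ.continuous
    have hint1 : Integrable (fun z : S × S => ψ z.1) γ :=
      cont_integrable _ (hψc.comp continuous_fst)
    have hint2 : Integrable (fun z : S × S => ψ z.2) γ :=
      cont_integrable _ (hψc.comp continuous_snd)
    have hintd : Integrable (fun z : S × S => dist z.1 z.2) γ := cont_integrable _ hdcont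
    have e1 : ∫ x, ψ x ∂p = ∫ z : S × S, ψ z.1 ∂γ := by
      rw [← hγ1]
      exact integral_map measurable_fst.aemeasurable hψc.aestronglyMeasurable
    have e2 : ∫ x, ψ x ∂q = ∫ z : S × S, ψ z.2 ∂γ := by
      rw [← hγ2]
      exact integral_map measurable_snd.aemeasurable hψc.aestronglyMeasurable
    rw [e1, e2, ← integral_sub hint1 hint2]
    refine integral_mono (hint1.sub hint2) hintd (fun z => ?_)
    have h1 := hψ.dist_le_mul z.1 z.2
    rw [NNReal.coe_one, one_mul, Real.dist_eq] at h1
    exact le_trans (le_abs_self _) h1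
  have hDbdd : BddAbove D := ⟨_, fun m hm => heasy _ hprodmem m hm⟩
  refine le_antisymm ?_ (csSup_le hDne (fun m hm => le_csInf hWne (fun r hr => heasy r hr m hm)))
  refine le_of_forall_pos_le_add ?_
  intro ε hε
  set δ : ℝ := ε/6 with hδdef
  have hδ : 0 < δ := by positivity
  -- finite δ-net and partition
  obtain ⟨t, ht⟩ := isCompact_univ.elim_finite_subcover (fun y : S => Metric.ball y δ)
    (fun _ => Metric.isOpen_ball) (fun y _ => Set.mem_iUnion.mpr ⟨y, Metric.mem_ball_self hδ⟩)
  haveI hιne : Nonempty {y // y ∈ t} := by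
    obtain ⟨y⟩ := hSne
    obtain ⟨x, hxt, -⟩ := Set.mem_iUnion₂.mp (ht (Set.mem_univ y))
    exact ⟨⟨x, hxt⟩⟩
  haveI := Classical.decEq {y // y ∈ t}
  set e := Fintype.equivFin {y // y ∈ t} with hedef
  set A : {y // y ∈ t} → Set S := fun i =>
    Metric.ball i.1 δ \ ⋃ (j : {y // y ∈ t}) (_ : e j < e i), Metric.ball j.1 δ with hAdef
  have hAmeas : ∀ i, MeasurableSet (A i) := fun i =>
    Metric.isOpen_ball.measurableSet.diff (MeasurableSet.iUnion fun j =>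
      MeasurableSet.iUnion fun _ => Metric.isOpen_ball.measurableSet)
  have hAsub : ∀ i, A i ⊆ Metric.ball i.1 δ := fun i => Set.diff_subset
  have hdisj : ∀ i j, i ≠ j → Disjoint (A i) (A j) := by
    have key : ∀ i j, e i < e j → Disjoint (A i) (A j) := by
      intro i j hij
      rw [Set.disjoint_left]
      intro y hyi hyj
      exact hyj.2 (Set.mem_iUnion.mpr ⟨i, Set.mem_iUnion.mpr ⟨hij, hAsub i hyi⟩⟩)
    intro i j hij
    rcases ((Equiv.injective e).ne hij).lt_or_gt with h | h
    · exact key i j h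
    · exact (key j i h).symm
  have hcover : ∀ y : S, ∃ i, y ∈ A i := by
    intro y
    have hFne : (Finset.univ.filter (fun i : {y // y ∈ t} => y ∈ Metric.ball i.1 δ)).Nonempty := by
      obtain ⟨x, hxt, hyx⟩ := Set.mem_iUnion₂.mp (ht (Set.mem_univ y))
      exact ⟨⟨x, hxt⟩, Finset.mem_filter.mpr ⟨Finset.mem_univ _, hyx⟩⟩
    obtain ⟨i₀, hi₀, hmin⟩ := Finset.exists_min_image _ (fun i => e i) hFne
    refine ⟨i₀, (Finset.mem_filter.mp hi₀).2, ?_⟩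
    intro hmem
    obtain ⟨j, hj⟩ := Set.mem_iUnion.mp hmem
    obtain ⟨hji, hyj⟩ := Set.mem_iUnion.mp hj
    exact absurd hji (not_lt.mpr (hmin j (Finset.mem_filter.mpr ⟨Finset.mem_univ _, hyj⟩)))
  have hbiUnion : (⋃ i, A i) = Set.univ :=
    Set.eq_univ_of_forall (fun y => Set.mem_iUnion.mpr (hcover y))
  have hsplit : ∀ m : Measure S, (∑ i, m.restrict (A i)) = m := by
    intro m
    ext s hs
    rw [Measure.finset_sum_apply]
    simp_rw [Measure.restrict_apply hs]
    rw [← measure_biUnion_finset (fun i _ j _ hij =>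
        ((hdisj i j hij).mono Set.inter_subset_right Set.inter_subset_right))
      (fun i _ => hs.inter (hAmeas i))]
    have huni : ⋃ i ∈ (Finset.univ : Finset {y // y ∈ t}), s ∩ A i = s := by
      simp only [Finset.mem_univ, Set.iUnion_true]
      rw [← Set.inter_iUnion, hbiUnion, Set.inter_univ]
    rw [huni]
  -- discrete marginals
  set av : {y // y ∈ t} → ℝ := fun i => (p (A i)).toReal with havdef
  set bv : {y // y ∈ t} → ℝ := fun j => (q (A j)).toReal with hbvdef
  have hsummeas : ∀ m : Measure S, IsProbabilityMeasure m → ∑ i, m (A i) = 1 := by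
    intro m hm
    rw [← measure_biUnion_finset (fun i _ j _ hij => hdisj i j hij) (fun i _ => hAmeas i)]
    have huni : ⋃ i ∈ (Finset.univ : Finset {y // y ∈ t}), A i = Set.univ := by
      simp only [Finset.mem_univ, Set.iUnion_true]
      exact hbiUnion
    rw [huni]
    exact hm.measure_univ
  have hsa : ∑ i, av i = 1 := by
    rw [havdef]
    calc ∑ i, (p (A i)).toReal = (∑ i, p (A i)).toReal :=
          (ENNReal.toReal_sum (fun i _ => measure_ne_top p _)).symm
      _ = 1 := by rw [hsummeas p inferInstance, ENNReal.toReal_one]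
  have hsb : ∑ j, bv j = 1 := by
    rw [hbvdef]
    calc ∑ j, (q (A j)).toReal = (∑ j, q (A j)).toReal :=
          (ENNReal.toReal_sum (fun j _ => measure_ne_top q _)).symm
      _ = 1 := by rw [hsummeas q inferInstance, ENNReal.toReal_one]
  set cM : {y // y ∈ t} → {y // y ∈ t} → ℝ := fun i j => dist i.1 j.1 with hcMdef
  -- finite duality
  obtain ⟨ψfin, hψLip, hψdual⟩ := finite_kr cM (fun i => dist_self _)
    (fun i j => dist_nonneg) (fun i j k => dist_triangle _ _ _)
    av bv (fun i => ENNReal.toReal_nonneg) (fun j => ENNReal.toReal_nonneg) hsa hsb hδ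
  set vfin : ℝ := sInf {r : ℝ | ∃ γ : {y // y ∈ t} × {y // y ∈ t} → ℝ, (∀ z, 0 ≤ γ z) ∧
      (∀ i, ∑ j, γ (i, j) = av i) ∧ (∀ j, ∑ i, γ (i, j) = bv j) ∧
      r = ∑ z, γ z * cM z.1 z.2} with hvfindef
  -- near-optimal finite coupling
  have hTne : {r : ℝ | ∃ γ : {y // y ∈ t} × {y // y ∈ t} → ℝ, (∀ z, 0 ≤ γ z) ∧
      (∀ i, ∑ j, γ (i, j) = av i) ∧ (∀ j, ∑ i, γ (i, j) = bv j) ∧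
      r = ∑ z, γ z * cM z.1 z.2}.Nonempty := by
    refine ⟨_, fun z => av z.1 * bv z.2,
      fun z => mul_nonneg ENNReal.toReal_nonneg ENNReal.toReal_nonneg, ?_, ?_, rfl⟩
    · intro i
      show (∑ j, av i * bv j) = av i
      rw [← Finset.mul_sum, hsb, mul_one]
    · intro j
      show (∑ i, av i * bv j) = bv j
      rw [← Finset.sum_mul, hsa, one_mul]
  have hTbdd : BddBelow {r : ℝ | ∃ γ : {y // y ∈ t} × {y // y ∈ t} → ℝ, (∀ z, 0 ≤ γ z) ∧
      (∀ i, ∑ j, γ (i, j) = av i) ∧ (∀ j, ∑ i, γ (i, j) = bv j) ∧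
      r = ∑ z, γ z * cM z.1 z.2} := by
    refine ⟨0, fun r hr => ?_⟩
    obtain ⟨γ, hγ0, -, -, rfl⟩ := hr
    exact Finset.sum_nonneg fun z _ => mul_nonneg (hγ0 z) dist_nonneg
  obtain ⟨r', hr'mem, hr'lt⟩ := (csInf_lt_iff hTbdd hTne).mp
    (lt_add_of_pos_right vfin hδ)
  obtain ⟨γ', hγ'0, hγ'row, hγ'col, rfl⟩ := hr'mem
  have hγtot : ∑ z, γ' z = 1 := by
    rw [Fintype.sum_prod_type, Finset.sum_congr rfl (fun i _ => hγ'row i), hsa]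
  -- transfer to a measure coupling
  obtain ⟨γm, hγmp, hm1, hm2, hmcost⟩ := coupling_transfer p q
    (fun i : {y // y ∈ t} => i.1) A δ hAmeas hAsub (hsplit p) (hsplit q)
    γ' hγ'0 hγ'row hγ'col hγtot
  have hWmem : (∫ z, dist z.1 z.2 ∂γm) ∈ W := ⟨γm, hγmp, hm1, hm2, rfl⟩
  have hstep1 : sInf W ≤ (∑ z, γ' z * cM z.1 z.2) + 2*δ := by
    refine le_trans (csInf_le hWbdd hWmem) ?_
    exact hmcost
  -- Lipschitz extension of the finite potential
  have hne : (Finset.univ : Finset {y // y ∈ t}).Nonempty := Finset.univ_nonempty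
  set ψ : S → ℝ := fun y => Finset.univ.inf' hne (fun i => ψfin i + dist y i.1) with hψdef
  have hkeyLip : ∀ u w : S, ψ u - ψ w ≤ dist u w := by
    intro u w
    obtain ⟨j, -, hj⟩ := Finset.exists_mem_eq_inf' hne (fun i => ψfin i + dist w i.1)
    have h1 : ψ u ≤ ψfin j + dist u j.1 := by
      rw [hψdef]; exact Finset.inf'_le _ (Finset.mem_univ j)
    have h2 : ψ w = ψfin j + dist w j.1 := by rw [hψdef]; exact hj
    have h3 : dist u j.1 ≤ dist u w + dist w j.1 := dist_triangle _ _ _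
    rw [h2]
    linarith
  have hψlipS : LipschitzWith 1 ψ := by
    refine LipschitzWith.of_dist_le_mul (fun y y' => ?_)
    rw [NNReal.coe_one, one_mul, Real.dist_eq, abs_sub_le_iff]
    exact ⟨hkeyLip y y', by rw [dist_comm]; exact hkeyLip y' y⟩
  have hψval : ∀ i, ψ i.1 = ψfin i := by
    intro i
    apply le_antisymm
    · have := Finset.inf'_le (fun k => ψfin k + dist i.1 k.1) (Finset.mem_univ i)
      rw [hψdef]
      simpa using this
    · rw [hψdef]
      refine Finset.le_inf' hne _ (fun j _ => ?_)
      have := hψLip i j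
      rw [hcMdef] at this
      linarith
  have hψcont : Continuous ψ := hψlipS.continuous
  have hψintp : Integrable ψ p := cont_integrable _ hψcont
  have hψintq : Integrable ψ q := cont_integrable _ hψcont
  -- integral bounds
  have hψbound : ∀ i, ∀ y ∈ A i, ψfin i - δ ≤ ψ y ∧ ψ y ≤ ψfin i + δ := by
    intro i y hy
    have h1 : dist y i.1 < δ := Metric.mem_ball.mp (hAsub i hy)
    have h2 : |ψ y - ψ i.1| ≤ dist y i.1 := by
      have := hψlipS.dist_le_mul y i.1
      rwa [NNReal.coe_one, one_mul, Real.dist_eq] at this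
    rw [hψval i] at h2
    rw [abs_le] at h2
    constructor <;> linarith [h2.1, h2.2]
  have hbound1 : ∑ i, (ψfin i - δ) * av i ≤ ∫ y, ψ y ∂p := by
    have hrw : ∫ y, ψ y ∂p = ∑ i, ∫ y, ψ y ∂(p.restrict (A i)) := by
      conv_lhs => rw [← hsplit p]
      exact integral_finset_sum_measure (fun i _ => hψintp.restrict)
    rw [hrw]
    refine Finset.sum_le_sum (fun i _ => ?_)
    exact setIntegral_ge_of_const_le_real (hAmeas i) (measure_ne_top p _)
      (fun y hy => (hψbound i y hy).1) hψintp.integrableOn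
  have hbound2 : ∫ y, ψ y ∂q ≤ ∑ j, (ψfin j + δ) * bv j := by
    have hrw : ∫ y, ψ y ∂q = ∑ j, ∫ y, ψ y ∂(q.restrict (A j)) := by
      conv_lhs => rw [← hsplit q]
      exact integral_finset_sum_measure (fun j _ => hψintq.restrict)
    rw [hrw]
    refine Finset.sum_le_sum (fun j _ => ?_)
    have hneg : (-(ψfin j) - δ) * bv j ≤ ∫ y in A j, -ψ y ∂q := setIntegral_ge_of_const_le_real (hAmeas j) (measure_ne_top q _)
      (fun y hy => (by linarith [(hψbound j y hy).2] : -(ψfin j) - δ ≤ -ψ y))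
      hψintq.neg.integrableOn
    rw [integral_neg] at hneg
    have hkey : (ψfin j + δ) * bv j = -((-(ψfin j) - δ) * bv j) := by ring
    rw [hkey]
    linarith
  -- conclusion
  have hDmem : (∫ y, ψ y ∂p - ∫ y, ψ y ∂q) ∈ D := ⟨ψ, hψlipS, rfl⟩
  have hsSup : ∫ y, ψ y ∂p - ∫ y, ψ y ∂q ≤ sSup D := le_csSup hDbdd hDmem
  have halg1 : ∑ i, (ψfin i - δ) * av i = (∑ i, (av i - bv i) * ψfin i)
      + (∑ i, bv i * ψfin i) - δ * ∑ i, av i := by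
    rw [Finset.mul_sum, ← Finset.sum_add_distrib, ← Finset.sum_sub_distrib]
    exact Finset.sum_congr rfl (fun i _ => by ring)
  have halg2 : ∑ j, (ψfin j + δ) * bv j = (∑ j, bv j * ψfin j) + δ * ∑ j, bv j := by
    rw [Finset.mul_sum, ← Finset.sum_add_distrib]
    exact Finset.sum_congr rfl (fun j _ => by ring)
  rw [hsa] at halg1
  rw [hsb] at halg2
  have hfinal : vfin - 3*δ ≤ sSup D := by
    have h5 : vfin - δ ≤ ∑ i, (av i - bv i) * ψfin i := hψdual
    linarith
  have hε6 : ε = 6*δ := by rw [hδdef]; ring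
  linarith
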